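/- Let k ≥ 4 be an integer and set N = (k² + k)/2. Suppose B : ℕ → ℕ satisfies B(0) = 0, B(i) = i for 1 ≤ i ≤ N − 1, and B(n) = ∑_{i=1}^k B(n − B(n−i)) for all n with N ≤ n < N + (N−k)(k+1). Then for all integers q and r with 1 ≤ r ≤ k+1 and −k ≤ q(k+1) + r < (N−k)(k+1), one has B(N + q(k+1) + r) = N + qk + r − 1. -/
import Mathlib


-- indicator sum helper
private lemma hind (b : ℕ) : ∀ K, b ≤ K → ∑ i ∈ Finset.range K, (if i < b then 1 else 0) = b := by
  intro K
  induction K with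
  | zero => intro h; simp; omega
  | succ K ih =>
    intro h
    rw [Finset.sum_range_succ]
    by_cases hbK : b ≤ K
    · rw [ih hbK, if_neg (by omega)]; omega
    · have hb' : b = K + 1 := by omega
      subst hb'
      rw [if_pos (by omega)]
      have he : ∀ i ∈ Finset.range K, (if i < K+1 then 1 else 0) = 1 := by
        intro i hi; rw [if_pos]; simp at hi; omega
      rw [Finset.sum_congr rfl he, Finset.sum_const, Finset.card_range, smul_eq_mul]; omega

private lemma key (k M : ℕ) (hk : 4 ≤ k) (hM : k * k = 2 * M + k) (B : ℕ → ℕ)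
    (hinit : ∀ i, 1 ≤ i → i ≤ M + k - 1 → B i = i)
    (hrec : ∀ n, M + k ≤ n → n < M + k + M * (k + 1) →
      B n = ∑ i ∈ Finset.Icc 1 k, B (n - B (n - i))) :
    ∀ m, m < M * (k + 1) + k → ∀ a b, b ≤ k → m = a * (k + 1) + b →
      B (M + m) = M + a * k + b := by
  have hkk : 4 * k ≤ k * k := Nat.mul_le_mul_right k hk
  have hMk : k + 2 ≤ M := by omega
  intro m
  induction m using Nat.strong_induction_on with
  | _ m IH =>
    intro hmlt a b hbk hm
    by_cases hmk : m < k
    · -- base case: identity region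
      have ha0 : a = 0 := by
        by_contra h
        have h2 : 1 * (k+1) ≤ a * (k+1) := Nat.mul_le_mul_right _ (Nat.one_le_iff_ne_zero.mpr h)
        omega
      subst ha0
      have := hinit (M + m) (by omega) (by omega)
      omega
    · push_neg at hmk  -- k ≤ m
      have e1 : a * (k + 1) = a * k + a := by ring
      have haM : a ≤ M := by
        by_contra h
        have h2 : (M+1) * (k+1) ≤ a * (k+1) := Nat.mul_le_mul_right _ (by omega)
        have h3 : (M+1) * (k+1) = M * (k+1) + k + 1 := by ring
        omega
      have habk : a + b < M + k := by
        rcases Nat.lt_or_ge a M with h | h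
        · omega
        · have haM' : a = M := le_antisymm haM h
          rw [haM'] at hm; omega
      have hrecn := hrec (M + m) (by omega) (by omega)
      have hterm : ∀ i ∈ Finset.Icc 1 k,
          B (M + m - B (M + m - i)) = a + (i - 1) + (if i ≤ b then 1 else 0) := by
        intro i hi
        simp only [Finset.mem_Icc] at hi
        obtain ⟨hi1, hik⟩ := hi
        have hni : M + m - i = M + (m - i) := by omega
        by_cases hib : i ≤ b
        · -- same block
          have hB1 : B (M + (m - i)) = M + a * k + (b - i) :=
            IH (m - i) (by omega) (by omega) a (b - i) (by omega) (by omega)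
          rw [hni, hB1]
          have harg : M + m - (M + a * k + (b - i)) = a + i := by omega
          rw [harg, hinit (a + i) (by omega) (by omega)]
          rw [if_pos hib]; omega
        · -- previous block
          push_neg at hib  -- b < i
          obtain ⟨a', rfl⟩ : ∃ a', a = a' + 1 := by
            refine ⟨a - 1, ?_⟩
            rcases Nat.eq_zero_or_pos a with h0 | h; swap
            · omega
            · rw [h0] at hm; simp at hm; omega
          have e2 : (a' + 1) * (k + 1) = a' * (k+1) + (k+1) := by ring
          have e3 : a' * (k+1) = a' * k + a' := by ring
          have e4 : (a'+1) * k = a' * k + k := by ring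
          have hB1 : B (M + (m - i)) = M + a' * k + (b + k + 1 - i) :=
            IH (m - i) (by omega) (by omega) a' (b + k + 1 - i) (by omega) (by omega)
          rw [hni, hB1]
          have harg : M + m - (M + a' * k + (b + k + 1 - i)) = a' + i := by omega
          rw [harg, hinit (a' + i) (by omega) (by omega)]
          rw [if_neg (by omega)]; omega
      rw [hrecn, Finset.sum_congr rfl hterm, ← Finset.Ico_add_one_right_eq_Icc, Finset.sum_Ico_eq_sum_range]
      have hre : ∀ i ∈ Finset.range (k + 1 - 1),
          (a + (1 + i - 1) + if 1 + i ≤ b then 1 else 0) = (a + i + if i < b then 1 else 0) := by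
        intro i _
        have h1 : 1 + i - 1 = i := by omega
        have h2 : (1 + i ≤ b) ↔ (i < b) := by omega
        rw [h1]; simp only [h2]
      rw [Finset.sum_congr rfl hre]
      have hk1 : k + 1 - 1 = k := by omega
      rw [hk1, Finset.sum_add_distrib, Finset.sum_add_distrib, Finset.sum_const,
        Finset.card_range, hind b k hbk, smul_eq_mul]
      have hgauss : (∑ i ∈ Finset.range k, i) * 2 = k * (k - 1) := Finset.sum_range_id_mul_two k
      have e5 : k * (k - 1) + k = k * k := by
        have h1 : k - 1 + 1 = k := by omega
        calc k * (k-1) + k = k * ((k-1)+1) := by ring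
        _ = k * k := by rw [h1]
      have e6 : k * a = a * k := Nat.mul_comm k a
      omega




/-- with `k ≥ 4`, `N = (k²+k)/2`, `B` satisfying the initial condition and the
`B_k`-recurrence for `N ≤ n < N + (N−k)(k+1)`: for all integers `q, r` with `1 ≤ r ≤ k+1` and
`−k ≤ q(k+1) + r < (N−k)(k+1)`, one has `B (N + q(k+1) + r) = N + qk + r − 1`. -/
theorem stmt_13 (k N : ℕ) (hk : 4 ≤ k) (hN : N = (k ^ 2 + k) / 2) (B : ℕ → ℕ)
    (hB0 : B 0 = 0)
    (hinit : ∀ i, 1 ≤ i → i ≤ N - 1 → B i = i)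
    (hrec : ∀ n, N ≤ n → n < N + (N - k) * (k + 1) →
      B n = ∑ i ∈ Finset.Icc 1 k, B (n - B (n - i)))
    (q r : ℤ) (hr1 : 1 ≤ r) (hr2 : r ≤ (k : ℤ) + 1)
    (hlo : -(k : ℤ) ≤ q * ((k : ℤ) + 1) + r)
    (hhi : q * ((k : ℤ) + 1) + r < ((N : ℤ) - k) * ((k : ℤ) + 1)) :
    (B (((N : ℤ) + q * ((k : ℤ) + 1) + r).toNat) : ℤ) = (N : ℤ) + q * k + r - 1 := by

  -- basic numeric facts
  have hdvd : 2 ∣ k ^ 2 + k := by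
    have h1 : k ^ 2 + k = k * (k + 1) := by ring
    rw [h1]
    exact (Nat.even_mul_succ_self k).two_dvd
  have h2N : 2 * N = k ^ 2 + k := by
    rw [hN, Nat.mul_div_cancel' hdvd]
  have hkk : k ^ 2 = k * k := by ring
  have hkk4 : 4 * k ≤ k * k := Nat.mul_le_mul_right k hk
  have hkN : k + 2 ≤ N - k := by omega
  set M := N - k with hMdef
  have hNM : N = M + k := by omega
  have hMeq : k * k = 2 * M + k := by omega
  -- integer side: bounds on q
  have hq : -1 ≤ q := by
    by_contra h
    push_neg at h
    have h2 : q ≤ -2 := by omega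
    have h3 : q * ((k:ℤ) + 1) ≤ -2 * ((k:ℤ) + 1) := by
      apply mul_le_mul_of_nonneg_right h2 (by positivity)
    have hk' : (4:ℤ) ≤ (k:ℤ) := by exact_mod_cast hk
    linarith
  set a : ℕ := (q + 1).toNat with hadef
  set b : ℕ := (r - 1).toNat with hbdef
  have haZ : (a : ℤ) = q + 1 := Int.toNat_of_nonneg (by omega)
  have hbZ : (b : ℤ) = r - 1 := Int.toNat_of_nonneg (by omega)
  have hbk : b ≤ k := by
    have : (b : ℤ) ≤ (k : ℤ) := by omega
    exact_mod_cast this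
  set m : ℕ := a * (k + 1) + b with hmdef
  have hmZ : (m : ℤ) = q * ((k:ℤ) + 1) + r + k := by
    push_cast [hmdef]
    rw [haZ, hbZ]; ring
  have hMZ : (M : ℤ) = (N : ℤ) - k := by
    have : (k:ℤ) ≤ (N:ℤ) := by exact_mod_cast (by omega : k ≤ N)
    omega
  have hmlt : m < M * (k + 1) + k := by
    have h1 : (m : ℤ) < (M : ℤ) * ((k:ℤ) + 1) + k := by
      rw [hmZ, hMZ]; linarith
    exact_mod_cast (by push_cast; exact h1 : (m : ℤ) < ((M * (k + 1) + k : ℕ) : ℤ))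
  have hinit' : ∀ i, 1 ≤ i → i ≤ M + k - 1 → B i = i := by
    intro i h1 h2; exact hinit i h1 (by omega)
  have hrec' : ∀ n, M + k ≤ n → n < M + k + M * (k + 1) →
      B n = ∑ i ∈ Finset.Icc 1 k, B (n - B (n - i)) := by
    intro n h1 h2
    exact hrec n (by omega) (by omega)
  have hkey := key k M hk hMeq B hinit' hrec' m hmlt a b hbk rfl
  have hargeq : ((N : ℤ) + q * ((k:ℤ) + 1) + r).toNat = M + m := by
    have h1 : (N : ℤ) + q * ((k:ℤ) + 1) + r = ((M + m : ℕ) : ℤ) := by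
      push_cast
      rw [hmZ, hMZ]; ring
    rw [h1, Int.toNat_natCast]
  rw [hargeq, hkey]
  push_cast
  rw [haZ, hbZ, hMZ]
  ring
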